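/- Let (φ,Q,ξ,η,g) be a weak almost contact metric structure on M for which N⁽¹⁾(X,Y) = 0 for all smooth vector fields X,Y. Then dη(X,ξ) = 0 for every smooth vector field X; equivalently, the tensor N⁽⁴⁾(X) := ξ(η(X)) - η([ξ,X]) vanishes identically. -/

import Mathlib

open scoped Manifold

noncomputable section

/-- Smooth vector fields on a manifold `M`, modelled as derivations of the algebra of smooth
real-valued functions on `M`. -/
abbrev VectorField {E : Type*} [NormedAddCommGroup E] [NormedSpace ℝ E]
    {H : Type*} [TopologicalSpace H] (I : ModelWithCorners ℝ E H)
    (M : Type*) [TopologicalSpace M] [ChartedSpace H M] :=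
  Derivation ℝ C^(⊤ : ℕ∞)⟮I, M; ℝ⟯ C^(⊤ : ℕ∞)⟮I, M; ℝ⟯

variable {E : Type*} [NormedAddCommGroup E] [NormedSpace ℝ E]
  {H : Type*} [TopologicalSpace H] {I : ModelWithCorners ℝ E H}
  {M : Type*} [TopologicalSpace M] [ChartedSpace H M]

/-- `dη(X,Y) = ½ (X(η(Y)) - Y(η(X)) - η([X,Y]))`. -/
def dEta (η : VectorField I M →ₗ[C^(⊤ : ℕ∞)⟮I, M; ℝ⟯] C^(⊤ : ℕ∞)⟮I, M; ℝ⟯)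
    (X Y : VectorField I M) : C^(⊤ : ℕ∞)⟮I, M; ℝ⟯ :=
  (2 : ℝ)⁻¹ • (X (η Y) - Y (η X) - η ⁅X, Y⁆)

/-- The Nijenhuis torsion `[φ,φ](X,Y) = φ²[X,Y] + [φX,φY] - φ[φX,Y] - φ[X,φY]`. -/
def nijenhuis (φ : VectorField I M → VectorField I M) (X Y : VectorField I M) :
    VectorField I M :=
  φ (φ ⁅X, Y⁆) + ⁅φ X, φ Y⁆ - φ ⁅φ X, Y⁆ - φ ⁅X, φ Y⁆

/-- `N⁽¹⁾(X,Y) = [φ,φ](X,Y) + 2 dη(X,Y) Qξ`. -/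
def N1 (φ Q : VectorField I M →ₗ[C^(⊤ : ℕ∞)⟮I, M; ℝ⟯] VectorField I M)
    (ξ : VectorField I M) (η : VectorField I M →ₗ[C^(⊤ : ℕ∞)⟮I, M; ℝ⟯] C^(⊤ : ℕ∞)⟮I, M; ℝ⟯)
    (X Y : VectorField I M) : VectorField I M :=
  nijenhuis ⇑φ X Y + ((2 : ℝ) • dEta η X Y) • Q ξ

/-- `N⁽²⁾(X,Y) = (φX)(η(Y)) - η([φX,Y]) - (φY)(η(X)) + η([φY,X])`. -/
def N2 (φ : VectorField I M →ₗ[C^(⊤ : ℕ∞)⟮I, M; ℝ⟯] VectorField I M)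
    (η : VectorField I M →ₗ[C^(⊤ : ℕ∞)⟮I, M; ℝ⟯] C^(⊤ : ℕ∞)⟮I, M; ℝ⟯)
    (X Y : VectorField I M) : C^(⊤ : ℕ∞)⟮I, M; ℝ⟯ :=
  (φ X) (η Y) - η ⁅φ X, Y⁆ - (φ Y) (η X) + η ⁅φ Y, X⁆


/-- In the algebra of smooth functions, `f * f = 0` implies `f = 0`. -/
lemma smooth_mul_self_eq_zero {f : C^(⊤ : ℕ∞)⟮I, M; ℝ⟯} (h : f * f = 0) : f = 0 := by
  ext x
  have hx := DFunLike.congr_fun h x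
  simp only [ContMDiffMap.coe_mul, ContMDiffMap.coe_zero, Pi.mul_apply, Pi.zero_apply] at hx ⊢
  exact mul_self_eq_zero.mp hx

lemma bracket_zero_right (D : VectorField I M) : ⁅D, (0 : VectorField I M)⁆ = 0 := by
  ext a
  simp [Derivation.commutator_apply]

set_option maxHeartbeats 2000000 in
theorem weak_normal_implies_N4_vanishes
    [FiniteDimensional ℝ E] [I.Boundaryless] [IsManifold I (⊤ : ℕ∞) M]
    (n : ℕ) (hn : 1 ≤ n) (hdim : Module.finrank ℝ E = 2 * n + 1)
    (φ Q : VectorField I M →ₗ[C^(⊤ : ℕ∞)⟮I, M; ℝ⟯] VectorField I M)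
    (hQ : Function.Bijective Q)
    (ξ : VectorField I M)
    (η : VectorField I M →ₗ[C^(⊤ : ℕ∞)⟮I, M; ℝ⟯] C^(⊤ : ℕ∞)⟮I, M; ℝ⟯)
    (g : VectorField I M →ₗ[C^(⊤ : ℕ∞)⟮I, M; ℝ⟯] VectorField I M →ₗ[C^(⊤ : ℕ∞)⟮I, M; ℝ⟯] C^(⊤ : ℕ∞)⟮I, M; ℝ⟯)
    (ν : ℝ) (hν : 0 < ν)
    (hφφ : ∀ X, φ (φ X) = -(Q X) + η X • Q ξ)
    (hηξ : η ξ = 1)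
    (hQξ : Q ξ = ν • ξ)
    (hD : ∀ X, η X = 0 → η (φ X) = 0)
    (hg_symm : ∀ X Y, g X Y = g Y X)
    (hg_pos : ∀ X (x : M), 0 ≤ g X X x)
    (hg_def : ∀ X, g X X = 0 → X = 0)
    (hcompat : ∀ X Y, g (φ X) (φ Y) = g X (Q Y) - η X * η (Q Y))
    (hN1 : ∀ X Y, N1 φ Q ξ η X Y = 0)
    :
    (∀ X, dEta η X ξ = 0) ∧ (∀ X, ξ (η X) - η ⁅ξ, X⁆ = 0) := by

  -- Step 1: φ ξ = 0
  have hφ2ξ : φ (φ ξ) = 0 := by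
    rw [hφφ ξ, hηξ, one_smul, neg_add_cancel]
  have hφ3ξ : φ (φ (φ ξ)) = 0 := by rw [hφ2ξ, map_zero]
  have hA : Q (φ ξ) = Q (η (φ ξ) • ξ) := by
    have h := hφφ (φ ξ)
    rw [hφ3ξ, neg_add_eq_sub, eq_comm, sub_eq_zero] at h
    rw [map_smul]
    exact h.symm
  have hφξ : φ ξ = η (φ ξ) • ξ := hQ.injective hA
  have h5 : (η (φ ξ) * η (φ ξ)) • ξ = 0 := by
    calc (η (φ ξ) * η (φ ξ)) • ξ = η (φ ξ) • (η (φ ξ) • ξ) := mul_smul _ _ _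
      _ = η (φ ξ) • φ ξ := by rw [← hφξ]
      _ = φ (η (φ ξ) • ξ) := (map_smul φ _ _).symm
      _ = φ (φ ξ) := by rw [← hφξ]
      _ = 0 := hφ2ξ
  have hsq : η (φ ξ) * η (φ ξ) = 0 := by
    have h := congrArg η h5
    rwa [η.map_smul, hηξ, smul_eq_mul, mul_one, map_zero] at h
  have hφξ0 : φ ξ = 0 := by
    rw [hφξ, smooth_mul_self_eq_zero hsq, zero_smul]
  -- ℝ-smul commutes with the C^∞-linear maps
  have hφQξ : φ (Q ξ) = 0 := by
    rw [hQξ, φ.map_smul_of_tower, hφξ0, smul_zero]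
  have hηQξ : η (Q ξ) = ν • (1 : C^(⊤ : ℕ∞)⟮I, M; ℝ⟯) := by
    rw [hQξ, η.map_smul_of_tower, hηξ]
  -- Step 2: the key computation for each X
  have key : ∀ X, X (η ξ) - ξ (η X) - η ⁅X, ξ⁆ = 0 := by
    intro X
    have hn1 := hN1 X ξ
    simp only [N1, nijenhuis] at hn1
    rw [hφξ0, bracket_zero_right, bracket_zero_right, map_zero] at hn1
    simp only [add_zero, sub_zero] at hn1
    set c : C^(⊤ : ℕ∞)⟮I, M; ℝ⟯ := (2 : ℝ) • dEta η X ξ with hc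
    have hφW : φ (φ ⁅X, ξ⁆ - ⁅φ X, ξ⁆) = -(c • Q ξ) := by
      rw [map_sub]
      exact eq_neg_of_add_eq_zero_left hn1
    have hφφW : φ (φ (φ ⁅X, ξ⁆ - ⁅φ X, ξ⁆)) = 0 := by
      rw [hφW, map_neg, map_smul, hφQξ, smul_zero, neg_zero]
    set W : VectorField I M := φ ⁅X, ξ⁆ - ⁅φ X, ξ⁆ with hWdef
    have hQW : Q W = Q (η W • ξ) := by
      have h := hφφ W
      rw [hφφW, neg_add_eq_sub, eq_comm, sub_eq_zero] at h
      rw [map_smul]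
      exact h.symm
    have hWξ : W = η W • ξ := hQ.injective hQW
    have hφW0 : φ W = 0 := by
      have h := congrArg φ hWξ
      rw [map_smul, hφξ0, smul_zero] at h
      exact h
    have hcQ : c • Q ξ = 0 := by
      have h := hφW.symm.trans hφW0
      exact neg_eq_zero.mp h
    have hck : c * (ν • (1 : C^(⊤ : ℕ∞)⟮I, M; ℝ⟯)) = 0 := by
      have h := congrArg η hcQ
      rwa [map_smul, hηQξ, smul_eq_mul, map_zero] at h
    have hc0 : c = 0 := by
      ext x
      have hx := DFunLike.congr_fun hck x
      simp only [ContMDiffMap.coe_mul, ContMDiffMap.coe_zero, ContMDiffMap.coe_smul, ContMDiffMap.coe_one,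
        Pi.mul_apply, Pi.zero_apply, Pi.smul_apply, Pi.one_apply,
        smul_eq_mul, mul_one] at hx ⊢
      rcases mul_eq_zero.mp hx with h | h
      · exact h
      · exact absurd h hν.ne'
    have hcinner : c = X (η ξ) - ξ (η X) - η ⁅X, ξ⁆ := by
      simp only [hc, dEta, smul_smul]
      norm_num
    rw [← hcinner]
    exact hc0
  -- Step 3: conclude
  have hX1 : ∀ X : VectorField I M, X (η ξ) = (0 : C^(⊤ : ℕ∞)⟮I, M; ℝ⟯) := by
    intro X
    rw [hηξ]
    exact Derivation.map_one_eq_zero X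
  have hskew : ∀ X : VectorField I M, η ⁅X, ξ⁆ = -η ⁅ξ, X⁆ := by
    intro X
    rw [← map_neg, ← lie_skew]
  constructor
  · intro X
    simp only [dEta]
    rw [key X, smul_zero]
  · intro X
    have h := key X
    rw [hX1 X, hskew X] at h
    linear_combination -h
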